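/- Let H be a subgroup of finite index in a group G. Then there exists an injective group homomorphism from G into the wreath product (∏_{G/H} H) ⋊ Perm(G/H), where Perm(G/H) is the group of permutations of the finite coset space G/H acting by permuting the factors of the product. -/
import Mathlib


/-- The action of the permutation group of a set `T` on `∏_T H` permuting the factors. -/
def permCoordAct (H : Type*) [Group H] (T : Type*) : Equiv.Perm T →* MulAut (T → H) where
  toFun σ :=
    { toFun := fun v t => v (σ⁻¹ t)
      invFun := fun v t => v (σ t)
      left_inv := fun v => by funext t; simp
      right_inv := fun v => by funext t; simp
      map_mul' := fun v w => rfl }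
  map_one' := by apply MulEquiv.ext; intro v; funext t; simp
  map_mul' σ τ := by
    apply MulEquiv.ext; intro v; funext t
    simp [MulAut.mul_def, Equiv.Perm.mul_def, Equiv.Perm.inv_def]

/-- A subgroup `H` of finite index in `G` gives an injective group homomorphism from `G`
into the permutation wreath product `(∏_{G/H} H) ⋊ Perm(G/H)`. -/
theorem embeds_in_wreath_of_finiteIndex (G : Type*) [Group G] (H : Subgroup G)
    [H.FiniteIndex] :
    ∃ f : G →* ((G ⧸ H) → H) ⋊[permCoordAct H (G ⧸ H)] Equiv.Perm (G ⧸ H),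
      Function.Injective f := by
  classical
  let σ : G ⧸ H → G := Quotient.out
  have hσ : ∀ t : G ⧸ H, QuotientGroup.mk (σ t) = t := fun t => QuotientGroup.out_eq' t
  have mem : ∀ (g : G) (t : G ⧸ H), (σ t)⁻¹ * (g * σ (g⁻¹ • t)) ∈ H := by
    intro g t
    rw [← QuotientGroup.eq, hσ]
    have h1 : QuotientGroup.mk (g * σ (g⁻¹ • t)) = g • QuotientGroup.mk (σ (g⁻¹ • t)) :=
      (MulAction.Quotient.smul_mk H g (σ (g⁻¹ • t))).symm
    rw [h1, hσ, smul_smul, mul_inv_cancel, one_smul]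
  let A : G → (G ⧸ H → H) := fun g t => ⟨(σ t)⁻¹ * (g * σ (g⁻¹ • t)), mem g t⟩
  let F : G → (((G ⧸ H) → H) ⋊[permCoordAct H (G ⧸ H)] Equiv.Perm (G ⧸ H)) :=
    fun g => ⟨A g, MulAction.toPermHom G (G ⧸ H) g⟩
  have hmul : ∀ g h, F (g * h) = F g * F h := by
    intro g h
    refine SemidirectProduct.ext ?_ (map_mul _ g h)
    funext t
    show A (g * h) t = A g t * A h (((MulAction.toPermHom G (G ⧸ H)) g)⁻¹ t)
    have h2 : ((MulAction.toPermHom G (G ⧸ H)) g)⁻¹ t = g⁻¹ • t := rfl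
    rw [h2]
    ext
    show (σ t)⁻¹ * ((g*h) * σ ((g*h)⁻¹ • t))
        = ((σ t)⁻¹ * (g * σ (g⁻¹ • t))) * ((σ (g⁻¹ • t))⁻¹ * (h * σ (h⁻¹ • g⁻¹ • t)))
    rw [mul_inv_rev, mul_smul]
    group
  refine ⟨MonoidHom.mk' F hmul, ?_⟩
  rw [injective_iff_map_eq_one]
  intro g hg
  have hr : MulAction.toPermHom G (G ⧸ H) g = 1 := congrArg SemidirectProduct.right hg
  have hl : A g = 1 := congrArg SemidirectProduct.left hg
  set e : G ⧸ H := QuotientGroup.mk (1 : G) with he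
  have h1 : g⁻¹ • e = e := by
    have := congrArg (fun p : Equiv.Perm (G ⧸ H) => p⁻¹ e) hr
    simpa using this
  have h2 := congrFun hl e
  rw [Subtype.ext_iff] at h2
  simp only [A, h1] at h2
  have h3 : (σ e)⁻¹ * (g * σ e) = 1 := h2
  have h4 : g * σ e = σ e := (inv_mul_eq_one.mp h3).symm
  have h5 : g * σ e = 1 * σ e := by rw [one_mul, h4]
  exact mul_right_cancel h5
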